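/- For the entangling circuit U_c(α,β,γ) = C₂₁ (1₂ ⊗ R_y(β)) C₁₂ (R_z(γ) ⊗ R_y(α)) C₂₁ applied to initial pure product states, the phase synchronization fidelity obeys the antisymmetry F(φ₁+π, φ₂, θ₁, θ₂) evaluated after the substitution (φ₁,φ₂,θ₁,θ₂) ↦ (−φ₁, −φ₂, π−θ₁, π−θ₂) equals minus the original value; explicitly, F(−φ₁+π, −φ₂, π−θ₁, π−θ₂) = −F(φ₁, φ₂, θ₁, θ₂) for all parameter values at which both sides are defined, where F(φ₁,φ₂,θ₁,θ₂) denotes F(|ψ(θ₁,φ₁)⟩⟨ψ(θ₁,φ₁)| ⊗ |ψ(θ₂,φ₂)⟩⟨ψ(θ₂,φ₂)|, U_c(α,β,γ)). -/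

import Mathlib

open Matrix Complex Real Kronecker
open scoped ComplexOrder

noncomputable section

/-- Pauli matrices -/
def pauliX : Matrix (Fin 2) (Fin 2) ℂ := !![0, 1; 1, 0]
def pauliY : Matrix (Fin 2) (Fin 2) ℂ := !![0, -Complex.I; Complex.I, 0]
def pauliZ : Matrix (Fin 2) (Fin 2) ℂ := !![1, 0; 0, -1]

/-- partial trace over the second qubit -/
def ptrace2 (ρ : Matrix (Fin 2 × Fin 2) (Fin 2 × Fin 2) ℂ) : Matrix (Fin 2) (Fin 2) ℂ :=
  fun i j => ∑ k : Fin 2, ρ (i, k) (j, k)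

/-- partial trace over the first qubit -/
def ptrace1 (ρ : Matrix (Fin 2 × Fin 2) (Fin 2 × Fin 2) ℂ) : Matrix (Fin 2) (Fin 2) ℂ :=
  fun i j => ∑ k : Fin 2, ρ (k, i) (k, j)

/-- Bloch vector of a single-qubit state -/
def bloch (τ : Matrix (Fin 2) (Fin 2) ℂ) : Fin 3 → ℝ :=
  ![(Matrix.trace (pauliX * τ)).re, (Matrix.trace (pauliY * τ)).re,
    (Matrix.trace (pauliZ * τ)).re]

/-- projection of the Bloch vector into the xy-plane -/
def mvec (τ : Matrix (Fin 2) (Fin 2) ℂ) : Fin 2 → ℝ :=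
  ![(Matrix.trace (pauliX * τ)).re, (Matrix.trace (pauliY * τ)).re]

def mdot (a b : Fin 2 → ℝ) : ℝ := a 0 * b 0 + a 1 * b 1
def mnorm (a : Fin 2 → ℝ) : ℝ := Real.sqrt (a 0 ^ 2 + a 1 ^ 2)

/-- quantum-phase fidelity between two single-qubit states -/
def phaseFid (τ₁ τ₂ : Matrix (Fin 2) (Fin 2) ℂ) : ℝ :=
  mdot (mvec τ₁) (mvec τ₂) / (mnorm (mvec τ₁) * mnorm (mvec τ₂))

/-- phase synchronization fidelity of a two-qubit state ρ under a unitary U -/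
def PSF (ρ U : Matrix (Fin 2 × Fin 2) (Fin 2 × Fin 2) ℂ) : ℝ :=
  phaseFid (ptrace2 (U * ρ * Uᴴ)) (ptrace1 (U * ρ * Uᴴ))

/-- pure qubit state |ψ(θ,φ)⟩ = cos(θ/2)|0⟩ + e^{iφ} sin(θ/2)|1⟩ -/
def ψ (θ φ : ℝ) : Fin 2 → ℂ :=
  ![(Real.cos (θ / 2) : ℂ), Complex.exp (Complex.I * φ) * (Real.sin (θ / 2) : ℂ)]

/-- density matrix |v⟩⟨v| of a vector -/
def dm (v : Fin 2 → ℂ) : Matrix (Fin 2) (Fin 2) ℂ := Matrix.vecMulVec v (star v)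

/-- CNOT with qubit 1 as control and qubit 2 as target -/
def CNOT12 : Matrix (Fin 2 × Fin 2) (Fin 2 × Fin 2) ℂ :=
  fun i j => if i.1 = j.1 ∧ i.2 = j.2 + j.1 then 1 else 0

/-- CNOT with qubit 2 as control and qubit 1 as target -/
def CNOT21 : Matrix (Fin 2 × Fin 2) (Fin 2 × Fin 2) ℂ :=
  fun i j => if i.1 = j.1 + j.2 ∧ i.2 = j.2 then 1 else 0

/-- R_y(β) = exp(−i(β/2)σ_y) -/
def Ry (β : ℝ) : Matrix (Fin 2) (Fin 2) ℂ :=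
  !![(Real.cos (β / 2) : ℂ), -(Real.sin (β / 2) : ℂ);
     (Real.sin (β / 2) : ℂ), (Real.cos (β / 2) : ℂ)]

/-- R_z(γ) = exp(−i(γ/2)σ_z) -/
def Rz (γ : ℝ) : Matrix (Fin 2) (Fin 2) ℂ :=
  !![Complex.exp (-(Complex.I * γ / 2)), 0; 0, Complex.exp (Complex.I * γ / 2)]

/-- rotation operator R_n̂(α) = exp(−i(α/2) n̂·σ) (closed form, n̂ a unit axis) -/
def Raxis (n : Fin 3 → ℝ) (α : ℝ) : Matrix (Fin 2) (Fin 2) ℂ :=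
  (Real.cos (α / 2) : ℂ) • (1 : Matrix (Fin 2) (Fin 2) ℂ) -
    (Complex.I * (Real.sin (α / 2) : ℂ)) •
      ((n 0 : ℂ) • pauliX + (n 1 : ℂ) • pauliY + (n 2 : ℂ) • pauliZ)

/-- the SO(3) rotation by angle α about the unit axis n̂ (Rodrigues formula) -/
def rot3 (n : Fin 3 → ℝ) (α : ℝ) (v : Fin 3 → ℝ) : Fin 3 → ℝ :=
  Real.cos α • v + Real.sin α • (crossProduct n v) +
    ((1 - Real.cos α) * (n ⬝ᵥ v)) • n

/-- the entangling circuit U_c(α,β,γ) -/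
def Uc (α β γ : ℝ) : Matrix (Fin 2 × Fin 2) (Fin 2 × Fin 2) ℂ :=
  CNOT21 * ((1 : Matrix (Fin 2) (Fin 2) ℂ) ⊗ₖ Ry β) * CNOT12 * (Rz γ ⊗ₖ Ry α) * CNOT21

/-- the general two-qubit circuit U_g -/
def Ug (α β γ μ₁ μ₂ ν₁ ν₂ σ₁ : ℝ) : Matrix (Fin 2 × Fin 2) (Fin 2 × Fin 2) ℂ :=
  ((Rz σ₁ * Ry ν₁ * Rz μ₁) ⊗ₖ (Ry ν₂ * Rz μ₂)) * Uc α β γ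



section AuxPSF

lemma aux_dm_psi (θ φ : ℝ) : dm (ψ θ φ) =
    !![(Real.cos (θ/2) : ℂ) * Real.cos (θ/2),
       (Real.cos (θ/2) : ℂ) * Real.sin (θ/2) * Complex.exp (-(Complex.I * φ));
       Complex.exp (Complex.I * φ) * Real.sin (θ/2) * Real.cos (θ/2),
       (Real.sin (θ/2) : ℂ) * Real.sin (θ/2)] := by
  have hE : Complex.exp (Complex.I * φ) * Complex.exp (-(Complex.I * φ)) = 1 := by
    rw [← Complex.exp_add]; simp
  ext i j
  fin_cases i <;> fin_cases j <;>
    simp [dm, ψ, Matrix.vecMulVec_apply, Complex.conj_ofReal, _root_.map_mul,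
      ← Complex.exp_conj, Complex.conj_I, -Complex.ofReal_cos, -Complex.ofReal_sin]
  · ring
  · linear_combination ((Real.sin (θ/2) : ℝ) : ℂ)^2 * hE

lemma aux_dmX (θ φ : ℝ) : dm (ψ (π - θ) (-φ)) = pauliX * dm (ψ θ φ) * pauliX := by
  have hE : Complex.exp (Complex.I * φ) * Complex.exp (-(Complex.I * φ)) = 1 := by
    rw [← Complex.exp_add]; simp
  rw [aux_dm_psi, aux_dm_psi, show (π - θ) / 2 = π / 2 - θ / 2 from by ring,
    Real.cos_pi_div_two_sub, Real.sin_pi_div_two_sub,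
    show Complex.I * ((-φ : ℝ) : ℂ) = -(Complex.I * φ) from by push_cast; ring,
    neg_neg]
  ext i j
  fin_cases i <;> fin_cases j <;>
    simp [pauliX, Matrix.mul_apply, Fin.sum_univ_two,
        -Complex.ofReal_cos, -Complex.ofReal_sin] <;>
    first
      | ring1
      | linear_combination ((Real.sin (θ/2) : ℝ) : ℂ)^2 * hE
      | linear_combination ((Real.cos (θ/2) : ℝ) : ℂ)^2 * hE

lemma aux_dmY (θ φ : ℝ) : dm (ψ (π - θ) (-φ + π)) = pauliY * dm (ψ θ φ) * pauliY := by
  have h2 : Complex.exp (Complex.I * ((-φ + π : ℝ) : ℂ)) = -Complex.exp (-(Complex.I * φ)) := by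
    push_cast
    rw [mul_add, Complex.exp_add,
      show Complex.I * (π:ℂ) = (π:ℂ) * Complex.I by ring, Complex.exp_pi_mul_I]
    ring_nf
  have h2' : Complex.exp (-(Complex.I * ((-φ + π : ℝ) : ℂ))) = -Complex.exp (Complex.I * φ) := by
    push_cast
    rw [show -(Complex.I * (-(φ:ℂ) + π)) = Complex.I * φ - (π:ℂ) * Complex.I by ring,
      Complex.exp_sub, Complex.exp_pi_mul_I]
    simp [div_neg]
  have hE : Complex.exp (Complex.I * φ) * Complex.exp (-(Complex.I * φ)) = 1 := by
    rw [← Complex.exp_add]; simp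
  rw [aux_dm_psi, aux_dm_psi, show (π - θ) / 2 = π / 2 - θ / 2 from by ring,
    Real.cos_pi_div_two_sub, Real.sin_pi_div_two_sub, h2, h2']
  ext i j
  fin_cases i <;> fin_cases j <;>
    simp [pauliY, Matrix.mul_apply, Fin.sum_univ_two,
        -Complex.ofReal_cos, -Complex.ofReal_sin] <;>
    first
      | ring1
      | (ring_nf; simp [Complex.I_sq]; try ring1)

lemma aux_RyY (β : ℝ) : Ry β * pauliY = pauliY * Ry β := by
  ext i j
  fin_cases i <;> fin_cases j <;>
    simp [Ry, pauliY, Matrix.mul_apply, Fin.sum_univ_two] <;> ring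

lemma aux_RzZ (γ : ℝ) : Rz γ * pauliZ = pauliZ * Rz γ := by
  ext i j
  fin_cases i <;> fin_cases j <;>
    simp [Rz, pauliZ, Matrix.mul_apply, Fin.sum_univ_two]

lemma aux_c21_yx : CNOT21 * (pauliY ⊗ₖ pauliX) = (pauliZ ⊗ₖ pauliY) * CNOT21 := by
  ext ⟨i1, i2⟩ ⟨j1, j2⟩
  fin_cases i1 <;> fin_cases i2 <;> fin_cases j1 <;> fin_cases j2 <;>
    simp [CNOT21, pauliX, pauliY, pauliZ, Matrix.mul_apply, Fintype.sum_prod_type,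
      Fin.sum_univ_two]

lemma aux_c12_zy :
    CNOT12 * (pauliZ ⊗ₖ pauliY) = ((1 : Matrix (Fin 2) (Fin 2) ℂ) ⊗ₖ pauliY) * CNOT12 := by
  ext ⟨i1, i2⟩ ⟨j1, j2⟩
  fin_cases i1 <;> fin_cases i2 <;> fin_cases j1 <;> fin_cases j2 <;>
    simp [CNOT12, pauliY, pauliZ, Matrix.mul_apply, Fintype.sum_prod_type,
      Fin.sum_univ_two, Matrix.one_apply]

lemma aux_c21_1y :
    CNOT21 * ((1 : Matrix (Fin 2) (Fin 2) ℂ) ⊗ₖ pauliY) = (pauliX ⊗ₖ pauliY) * CNOT21 := by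
  ext ⟨i1, i2⟩ ⟨j1, j2⟩
  fin_cases i1 <;> fin_cases i2 <;> fin_cases j1 <;> fin_cases j2 <;>
    simp [CNOT21, pauliX, pauliY, Matrix.mul_apply, Fintype.sum_prod_type,
      Fin.sum_univ_two, Matrix.one_apply]

lemma aux_Uc_comm (α β γ : ℝ) :
    Uc α β γ * (pauliY ⊗ₖ pauliX) = (pauliX ⊗ₖ pauliY) * Uc α β γ := by
  have k1 : (Rz γ ⊗ₖ Ry α) * (pauliZ ⊗ₖ pauliY) = (pauliZ ⊗ₖ pauliY) * (Rz γ ⊗ₖ Ry α) := by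
    rw [← Matrix.mul_kronecker_mul, ← Matrix.mul_kronecker_mul, aux_RzZ, aux_RyY]
  have k2 : ((1 : Matrix (Fin 2) (Fin 2) ℂ) ⊗ₖ Ry β) * ((1 : Matrix (Fin 2) (Fin 2) ℂ) ⊗ₖ pauliY)
      = ((1 : Matrix (Fin 2) (Fin 2) ℂ) ⊗ₖ pauliY) * ((1 : Matrix (Fin 2) (Fin 2) ℂ) ⊗ₖ Ry β) := by
    rw [← Matrix.mul_kronecker_mul, ← Matrix.mul_kronecker_mul, aux_RyY, one_mul]
  unfold Uc
  simp only [mul_assoc]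
  rw [aux_c21_yx]
  rw [← mul_assoc (Rz γ ⊗ₖ Ry α) (pauliZ ⊗ₖ pauliY) CNOT21, k1,
    mul_assoc (pauliZ ⊗ₖ pauliY)]
  rw [← mul_assoc CNOT12 (pauliZ ⊗ₖ pauliY), aux_c12_zy, mul_assoc]
  rw [← mul_assoc ((1 : Matrix (Fin 2) (Fin 2) ℂ) ⊗ₖ Ry β)
    ((1 : Matrix (Fin 2) (Fin 2) ℂ) ⊗ₖ pauliY), k2, mul_assoc]
  rw [← mul_assoc CNOT21 ((1 : Matrix (Fin 2) (Fin 2) ℂ) ⊗ₖ pauliY), aux_c21_1y, mul_assoc]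

lemma aux_herm_yx : (pauliY ⊗ₖ pauliX)ᴴ = pauliY ⊗ₖ pauliX := by
  ext ⟨i1, i2⟩ ⟨j1, j2⟩
  fin_cases i1 <;> fin_cases i2 <;> fin_cases j1 <;> fin_cases j2 <;>
    simp [pauliX, pauliY, Matrix.conjTranspose_apply]

lemma aux_herm_xy : (pauliX ⊗ₖ pauliY)ᴴ = pauliX ⊗ₖ pauliY := by
  ext ⟨i1, i2⟩ ⟨j1, j2⟩
  fin_cases i1 <;> fin_cases i2 <;> fin_cases j1 <;> fin_cases j2 <;>
    simp [pauliX, pauliY, Matrix.conjTranspose_apply]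

lemma aux_ptrace2_conj (M : Matrix (Fin 2 × Fin 2) (Fin 2 × Fin 2) ℂ) :
    ptrace2 ((pauliX ⊗ₖ pauliY) * M * (pauliX ⊗ₖ pauliY)) = pauliX * ptrace2 M * pauliX := by
  ext i j
  fin_cases i <;> fin_cases j <;>
    simp [ptrace2, pauliX, pauliY, Matrix.mul_apply, Fintype.sum_prod_type,
      Fin.sum_univ_two, Matrix.vecMul, dotProduct, Complex.I_sq] <;>
    (try ring1) <;> (ring_nf; simp [Complex.I_sq]; try ring1)

lemma aux_ptrace1_conj (M : Matrix (Fin 2 × Fin 2) (Fin 2 × Fin 2) ℂ) :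
    ptrace1 ((pauliX ⊗ₖ pauliY) * M * (pauliX ⊗ₖ pauliY)) = pauliY * ptrace1 M * pauliY := by
  ext i j
  fin_cases i <;> fin_cases j <;>
    simp [ptrace1, pauliX, pauliY, Matrix.mul_apply, Fintype.sum_prod_type,
      Fin.sum_univ_two, Matrix.vecMul, dotProduct, Complex.I_sq] <;>
    (try ring1) <;> (ring_nf; simp [Complex.I_sq]; try ring1)

lemma aux_mvec_X (τ : Matrix (Fin 2) (Fin 2) ℂ) :
    mvec (pauliX * τ * pauliX) = ![mvec τ 0, -(mvec τ 1)] := by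
  ext i
  fin_cases i <;>
    simp [mvec, Matrix.trace, Matrix.diag, pauliX, pauliY, Matrix.mul_apply,
      Fin.sum_univ_two, Matrix.vecMul, dotProduct, Complex.I_sq] <;>
    (try ring1) <;> (ring_nf; simp [Complex.I_sq]; try ring1)

lemma aux_mvec_Y (τ : Matrix (Fin 2) (Fin 2) ℂ) :
    mvec (pauliY * τ * pauliY) = ![-(mvec τ 0), mvec τ 1] := by
  ext i
  fin_cases i <;>
    simp [mvec, Matrix.trace, Matrix.diag, pauliX, pauliY, Matrix.mul_apply,
      Fin.sum_univ_two, Matrix.vecMul, dotProduct, Complex.I_sq] <;>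
    (try ring1) <;> (ring_nf; simp [Complex.I_sq]; try ring1)

end AuxPSF

/-- antisymmetry of the PSF of U_c under the substitution
(φ₁,φ₂,θ₁,θ₂) ↦ (−φ₁+π, −φ₂, π−θ₁, π−θ₂). -/
theorem uc_psf_antisymmetry (α β γ θ₁ θ₂ φ₁ φ₂ : ℝ)
    (h₁ : mvec (ptrace2 (Uc α β γ * (dm (ψ θ₁ φ₁) ⊗ₖ dm (ψ θ₂ φ₂)) *
        (Uc α β γ)ᴴ)) ≠ 0)
    (h₂ : mvec (ptrace1 (Uc α β γ * (dm (ψ θ₁ φ₁) ⊗ₖ dm (ψ θ₂ φ₂)) *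
        (Uc α β γ)ᴴ)) ≠ 0)
    (h₃ : mvec (ptrace2 (Uc α β γ *
        (dm (ψ (π - θ₁) (-φ₁ + π)) ⊗ₖ dm (ψ (π - θ₂) (-φ₂))) *
        (Uc α β γ)ᴴ)) ≠ 0)
    (h₄ : mvec (ptrace1 (Uc α β γ *
        (dm (ψ (π - θ₁) (-φ₁ + π)) ⊗ₖ dm (ψ (π - θ₂) (-φ₂))) *
        (Uc α β γ)ᴴ)) ≠ 0) :
    PSF (dm (ψ (π - θ₁) (-φ₁ + π)) ⊗ₖ dm (ψ (π - θ₂) (-φ₂))) (Uc α β γ) =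
      -PSF (dm (ψ θ₁ φ₁) ⊗ₖ dm (ψ θ₂ φ₂)) (Uc α β γ) := by
  have hρ : dm (ψ (π - θ₁) (-φ₁ + π)) ⊗ₖ dm (ψ (π - θ₂) (-φ₂))
      = (pauliY ⊗ₖ pauliX) * (dm (ψ θ₁ φ₁) ⊗ₖ dm (ψ θ₂ φ₂)) * (pauliY ⊗ₖ pauliX) := by
    rw [aux_dmY, aux_dmX, ← Matrix.mul_kronecker_mul, ← Matrix.mul_kronecker_mul]
  have hcomm' : (pauliY ⊗ₖ pauliX) * (Uc α β γ)ᴴ = (Uc α β γ)ᴴ * (pauliX ⊗ₖ pauliY) := by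
    have := congrArg Matrix.conjTranspose (aux_Uc_comm α β γ)
    rwa [Matrix.conjTranspose_mul, Matrix.conjTranspose_mul, aux_herm_yx, aux_herm_xy] at this
  have hU : Uc α β γ * (dm (ψ (π - θ₁) (-φ₁ + π)) ⊗ₖ dm (ψ (π - θ₂) (-φ₂))) * (Uc α β γ)ᴴ
      = (pauliX ⊗ₖ pauliY) *
        (Uc α β γ * (dm (ψ θ₁ φ₁) ⊗ₖ dm (ψ θ₂ φ₂)) * (Uc α β γ)ᴴ) * (pauliX ⊗ₖ pauliY) := by
    rw [hρ]
    calc Uc α β γ * ((pauliY ⊗ₖ pauliX) * (dm (ψ θ₁ φ₁) ⊗ₖ dm (ψ θ₂ φ₂)) * (pauliY ⊗ₖ pauliX))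
          * (Uc α β γ)ᴴ
        = (Uc α β γ * (pauliY ⊗ₖ pauliX)) * (dm (ψ θ₁ φ₁) ⊗ₖ dm (ψ θ₂ φ₂)) *
            ((pauliY ⊗ₖ pauliX) * (Uc α β γ)ᴴ) := by
          simp only [mul_assoc]
      _ = _ := by
          rw [aux_Uc_comm, hcomm']
          simp only [mul_assoc]
  unfold PSF phaseFid
  rw [hU, aux_ptrace2_conj, aux_ptrace1_conj, aux_mvec_X, aux_mvec_Y]
  set a := mvec (ptrace2 (Uc α β γ * (dm (ψ θ₁ φ₁) ⊗ₖ dm (ψ θ₂ φ₂)) * (Uc α β γ)ᴴ))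
  set b := mvec (ptrace1 (Uc α β γ * (dm (ψ θ₁ φ₁) ⊗ₖ dm (ψ θ₂ φ₂)) * (Uc α β γ)ᴴ))
  have hdot : mdot ![a 0, -(a 1)] ![-(b 0), b 1] = -(mdot a b) := by
    simp [mdot]; ring
  have hn1 : mnorm ![a 0, -(a 1)] = mnorm a := by simp [mnorm]
  have hn2 : mnorm ![-(b 0), b 1] = mnorm b := by simp [mnorm]
  rw [hdot, hn1, hn2, neg_div]


end
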